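/- Let Ω be a probability space and let Y, X_C, X_J, X, X̃¹, X̃² be random variables with values in standard Borel spaces F, E_C, E_J, E, E, E respectively, satisfying: (i) X̃¹ is conditionally independent of Y given X_C and the conditional distribution of X̃¹ given X_C equals the conditional distribution of X given X_C (as Markov kernels, almost everywhere); (ii) X̃² is conditionally independent of Y given (X_C, X_J) and the conditional distribution of X̃² given (X_C, X_J) equals the conditional distribution of X given (X_C, X_J). Let f : E → ℝ be measurable and L : F × ℝ → ℝ be measurable with L(Y, f(X̃¹)) and L(Y, f(X̃²)) integrable, and define the associative importance AI(X_J | X_C; f, f) := E[L(Y, f(X̃¹))] − E[L(Y, f(X̃²))]. If AI(X_J | X_C; f, f) ≠ 0, then Y is not conditionally independent of X_J given X_C. -/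

import Mathlib

open MeasureTheory ProbabilityTheory

open Set

-- H1: rectangle ext
lemma dedact_rect_ext {α β : Type*} [MeasurableSpace α] [MeasurableSpace β]
    (μ ν : Measure (α × β)) [IsFiniteMeasure μ] [IsFiniteMeasure ν]
    (h : ∀ s t, MeasurableSet s → MeasurableSet t → μ (s ×ˢ t) = ν (s ×ˢ t)) : μ = ν := by
  refine MeasureTheory.ext_of_generate_finite _ generateFrom_prod.symm isPiSystem_prod ?_ ?_
  · rintro _ ⟨s, hs, t, ht, rfl⟩; exact h s t hs ht
  · simpa using h univ univ MeasurableSet.univ MeasurableSet.univ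

-- H1': two-level rectangle ext on (α × β) × γ
lemma dedact_rect3_ext {α β γ : Type*} [MeasurableSpace α] [MeasurableSpace β] [MeasurableSpace γ]
    (μ ν : Measure ((α × β) × γ)) [IsFiniteMeasure μ] [IsFiniteMeasure ν]
    (h : ∀ s t u, MeasurableSet s → MeasurableSet t → MeasurableSet u →
      μ ((s ×ˢ t) ×ˢ u) = ν ((s ×ˢ t) ×ˢ u)) : μ = ν := by
  have hC : MeasurableSpace.generateFrom
      (image2 (· ×ˢ ·) (image2 (· ×ˢ ·) {s : Set α | MeasurableSet s} {t : Set β | MeasurableSet t})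
        {u : Set γ | MeasurableSet u}) = Prod.instMeasurableSpace := by
    refine generateFrom_eq_prod generateFrom_prod MeasurableSpace.generateFrom_measurableSet ?_
      isCountablySpanning_measurableSet
    exact ⟨fun _ => univ ×ˢ univ, fun _ => mem_image2_of_mem MeasurableSet.univ MeasurableSet.univ,
      by simp [Set.iUnion_const]⟩
  refine MeasureTheory.ext_of_generate_finite _ hC.symm
    (isPiSystem_prod.prod MeasurableSpace.isPiSystem_measurableSet) ?_ ?_
  · rintro _ ⟨_, ⟨s, hs, t, ht, rfl⟩, u, hu, rfl⟩; exact h s t u hs ht hu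
  · simpa using h univ univ univ MeasurableSet.univ MeasurableSet.univ MeasurableSet.univ

-- H2: pull-out
lemma dedact_integral_condexp_mul {Ω : Type*} [mΩ : MeasurableSpace Ω]
    (P : Measure Ω) [IsProbabilityMeasure P] {m : MeasurableSpace Ω}
    (hm : m ≤ mΩ) {f g : Ω → ℝ}
    (hf : Integrable f P) (hgf : Integrable (fun ω => g ω * f ω) P)
    (hg : StronglyMeasurable[m] g) :
    ∫ ω, (P[f|m]) ω * g ω ∂P = ∫ ω, f ω * g ω ∂P := by
  have h := condExp_mul_of_stronglyMeasurable_left hg hgf hf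
  calc ∫ ω, (P[f|m]) ω * g ω ∂P = ∫ ω, g ω * (P[f|m]) ω ∂P := by simp_rw [mul_comm]
    _ = ∫ ω, (P[fun ω => g ω * f ω|m]) ω ∂P := (integral_congr_ae h.symm)
    _ = ∫ ω, g ω * f ω ∂P := by exact integral_condExp (m₀ := mΩ) (μ := P) hm
    _ = ∫ ω, f ω * g ω ∂P := by simp_rw [mul_comm]

-- Lemma C
lemma dedact_inter_eq_integral_kernels {Ω γ α β : Type*}
    [mΩ : MeasurableSpace Ω] [StandardBorelSpace Ω] [Nonempty Ω]
    [mγ : MeasurableSpace γ]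
    [mα : MeasurableSpace α] [StandardBorelSpace α] [Nonempty α]
    [mβ : MeasurableSpace β] [StandardBorelSpace β] [Nonempty β]
    (P : Measure Ω) [IsProbabilityMeasure P]
    {W : Ω → γ} {U : Ω → α} {V : Ω → β} {X' : Ω → α}
    (hW : Measurable W) (hU : Measurable U) (hV : Measurable V) (hX' : Measurable X')
    (hci : CondIndepFun (mγ.comap W) hW.comap_le U V P)
    (hker : ∀ᵐ c ∂(P.map W), condDistrib U W P c = condDistrib X' W P c)
    {A : Set Ω} (hA : MeasurableSet[mγ.comap W] A)
    {t : Set α} {r : Set β} (ht : MeasurableSet t) (hr : MeasurableSet r) :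
    (P (A ∩ (U ⁻¹' t ∩ V ⁻¹' r))).toReal
      = ∫ ω, A.indicator (fun _ => (1:ℝ)) ω *
          ((condDistrib X' W P (W ω) t).toReal * (condDistrib V W P (W ω) r).toReal) ∂P := by
  have hm : mγ.comap W ≤ mΩ := hW.comap_le
  have hB : MeasurableSet (U ⁻¹' t ∩ V ⁻¹' r) := (hU ht).inter (hV hr)
  have hint : Integrable ((U ⁻¹' t ∩ V ⁻¹' r).indicator (fun _ => (1:ℝ))) P :=
    (integrable_const 1).indicator hB
  have h3 := (condIndepFun_iff_condExp_inter_preimage_eq_mul (m' := mγ.comap W)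
    (hm' := hW.comap_le) hU hV).mp hci t r ht hr
  have h4 := condDistrib_ae_eq_condExp (μ := P) hW hU ht
  simp only [measureReal_def] at h4
  have h5 := condDistrib_ae_eq_condExp (μ := P) hW hV hr
  simp only [measureReal_def] at h5
  have h6 : ∀ᵐ ω ∂P, condDistrib U W P (W ω) = condDistrib X' W P (W ω) :=
    ae_of_ae_map hW.aemeasurable hker
  have h7 : (P⟦U ⁻¹' t ∩ V ⁻¹' r|mγ.comap W⟧) =ᵐ[P]
      fun ω => (condDistrib X' W P (W ω) t).toReal * (condDistrib V W P (W ω) r).toReal := by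
    filter_upwards [h3, h4, h5, h6] with ω e3 e4 e5 e6
    rw [e3, ← e4, ← e5, e6]
  calc (P (A ∩ (U ⁻¹' t ∩ V ⁻¹' r))).toReal
      = ∫ ω in A, (U ⁻¹' t ∩ V ⁻¹' r).indicator (fun _ => (1:ℝ)) ω ∂P := by
        rw [setIntegral_indicator hB]
        simp [Measure.restrict_apply hB, Set.inter_comm, measureReal_def]
    _ = ∫ ω in A, (P⟦U ⁻¹' t ∩ V ⁻¹' r|mγ.comap W⟧) ω ∂P :=
        (setIntegral_condExp hm hint hA).symm
    _ = ∫ ω in A, (condDistrib X' W P (W ω) t).toReal * (condDistrib V W P (W ω) r).toReal ∂P :=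
        integral_congr_ae (ae_restrict_of_ae h7)
    _ = ∫ ω, A.indicator (fun ω => (condDistrib X' W P (W ω) t).toReal
          * (condDistrib V W P (W ω) r).toReal) ω ∂P := (integral_indicator (hm _ hA)).symm
    _ = _ := by
        congr 1; funext ω; by_cases h : ω ∈ A <;> simp [h]

-- Lemma D
lemma dedact_kernel_to_indicator {Ω γ α : Type*}
    [mΩ : MeasurableSpace Ω] [StandardBorelSpace Ω] [Nonempty Ω]
    [mγ : MeasurableSpace γ]
    [mα : MeasurableSpace α] [StandardBorelSpace α] [Nonempty α]
    (P : Measure Ω) [IsProbabilityMeasure P]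
    {W : Ω → γ} {X' : Ω → α} (hW : Measurable W) (hX' : Measurable X')
    {t : Set α} (ht : MeasurableSet t) {g : Ω → ℝ}
    (hg : StronglyMeasurable[mγ.comap W] g) (hgb : ∀ ω, ‖g ω‖ ≤ 1) :
    ∫ ω, (condDistrib X' W P (W ω) t).toReal * g ω ∂P
      = ∫ ω, (X' ⁻¹' t).indicator (fun _ => (1:ℝ)) ω * g ω ∂P := by
  have hm : mγ.comap W ≤ mΩ := hW.comap_le
  have h4 := condDistrib_ae_eq_condExp (μ := P) hW hX' ht
  simp only [measureReal_def] at h4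
  have hgm : AEStronglyMeasurable g P := (hg.mono hm).aestronglyMeasurable
  have hfi : Integrable ((X' ⁻¹' t).indicator (fun _ => (1:ℝ))) P :=
    (integrable_const 1).indicator (hX' ht)
  have hgf : Integrable (fun ω => g ω * (X' ⁻¹' t).indicator (fun _ => (1:ℝ)) ω) P := by
    refine Integrable.mono' (integrable_const 1) (hgm.mul hfi.aestronglyMeasurable) ?_
    filter_upwards with ω
    rw [norm_mul]
    calc ‖g ω‖ * ‖(X' ⁻¹' t).indicator (fun _ => (1:ℝ)) ω‖ ≤ 1 * 1 := by
          refine mul_le_mul (hgb ω) ?_ (norm_nonneg _) zero_le_one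
          by_cases h : ω ∈ X' ⁻¹' t <;> simp [h]
      _ = 1 := by ring
  calc ∫ ω, (condDistrib X' W P (W ω) t).toReal * g ω ∂P
      = ∫ ω, (P⟦X' ⁻¹' t|mγ.comap W⟧) ω * g ω ∂P := by
        refine integral_congr_ae ?_
        filter_upwards [h4] with ω e4 using by rw [e4]
    _ = ∫ ω, (X' ⁻¹' t).indicator (fun _ => (1:ℝ)) ω * g ω ∂P :=
        dedact_integral_condexp_mul P hm hfi hgf hg

-- toReal of Markov kernel value ≤ 1
lemma dedact_toReal_le_one {α β : Type*} [MeasurableSpace α] [MeasurableSpace β]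
    (κ : ProbabilityTheory.Kernel α β) [IsMarkovKernel κ] (a : α) (s : Set β) :
    (κ a s).toReal ≤ 1 := by
  have := prob_le_one (μ := κ a) (s := s)
  simpa using ENNReal.toReal_mono ENNReal.one_ne_top this

-- Lemma B
lemma dedact_condDistrib_fst_of_condIndep {Ω F EC EJ : Type*}
    [mΩ : MeasurableSpace Ω] [StandardBorelSpace Ω] [Nonempty Ω]
    [mF : MeasurableSpace F] [StandardBorelSpace F] [Nonempty F]
    [mEC : MeasurableSpace EC] [StandardBorelSpace EC] [Nonempty EC]
    [mEJ : MeasurableSpace EJ] [StandardBorelSpace EJ] [Nonempty EJ]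
    (P : Measure Ω) [IsProbabilityMeasure P]
    {Y : Ω → F} {XC : Ω → EC} {XJ : Ω → EJ}
    (hY : Measurable Y) (hXC : Measurable XC) (hXJ : Measurable XJ)
    (H : CondIndepFun (mEC.comap XC) hXC.comap_le Y XJ P) :
    ∀ᵐ ω ∂P, condDistrib Y XC P (XC ω)
      = condDistrib Y (fun ω => (XC ω, XJ ω)) P (XC ω, XJ ω) := by
  set Z2 : Ω → EC × EJ := fun ω => (XC ω, XJ ω) with hZ2def
  have hZ2 : Measurable Z2 := hXC.prodMk hXJ
  set κY' : Kernel (EC × EJ) F :=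
    Kernel.comap (condDistrib Y XC P) Prod.fst measurable_fst with hκY'
  have hmeq : P.map (fun ω => (Z2 ω, Y ω)) = (P.map Z2) ⊗ₘ κY' := by
    haveI : IsProbabilityMeasure (P.map (fun ω => (Z2 ω, Y ω))) :=
      Measure.isProbabilityMeasure_map (hZ2.prodMk hY).aemeasurable
    haveI : IsProbabilityMeasure (P.map Z2) := Measure.isProbabilityMeasure_map hZ2.aemeasurable
    refine dedact_rect3_ext _ _ (fun S T R hS hT hR => ?_)
    -- meas of the condDistrib factor
    have hκYR : Measurable[mEC.comap XC] fun ω => (condDistrib Y XC P (XC ω) R).toReal :=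
      (measurable_condDistrib hR).ennreal_toReal
    -- LHS
    have hpre : (fun ω => (Z2 ω, Y ω)) ⁻¹' ((S ×ˢ T) ×ˢ R)
        = XC ⁻¹' S ∩ (Y ⁻¹' R ∩ XJ ⁻¹' T) := by
      ext ω; simp [hZ2def, Set.mem_prod]; tauto
    have hLHS : (P.map (fun ω => (Z2 ω, Y ω))) ((S ×ˢ T) ×ˢ R)
        = P (XC ⁻¹' S ∩ (Y ⁻¹' R ∩ XJ ⁻¹' T)) := by
      rw [Measure.map_apply (hZ2.prodMk hY) (((hS.prod hT)).prod hR), hpre]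
    have hAm : MeasurableSet[mEC.comap XC] (XC ⁻¹' S) := ⟨S, hS, rfl⟩
    have hL1 : (P (XC ⁻¹' S ∩ (Y ⁻¹' R ∩ XJ ⁻¹' T))).toReal
        = ∫ ω, (XC ⁻¹' S).indicator (fun _ => (1:ℝ)) ω *
            ((condDistrib Y XC P (XC ω) R).toReal
              * (condDistrib XJ XC P (XC ω) T).toReal) ∂P :=
      dedact_inter_eq_integral_kernels P hXC hY hXJ hY H
        (Filter.Eventually.of_forall fun _ => rfl) hAm hR hT
    -- pull the XJ kernel out using lemD with g = indicator * toReal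
    set g : Ω → ℝ := fun ω => (XC ⁻¹' S).indicator (fun _ => (1:ℝ)) ω
        * (condDistrib Y XC P (XC ω) R).toReal with hgdef
    have hg : StronglyMeasurable[mEC.comap XC] g := by
      refine StronglyMeasurable.mul ?_ hκYR.stronglyMeasurable
      exact (stronglyMeasurable_const (b := (1:ℝ))).indicator hAm
    have hgb : ∀ ω, ‖g ω‖ ≤ 1 := by
      intro ω
      rw [hgdef, Real.norm_eq_abs, abs_mul]
      have h1 : |(XC ⁻¹' S).indicator (fun _ => (1:ℝ)) ω| ≤ 1 := by
        by_cases h : ω ∈ XC ⁻¹' S <;> simp [h]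
      have h2 : |(condDistrib Y XC P (XC ω) R).toReal| ≤ 1 := by
        rw [abs_of_nonneg ENNReal.toReal_nonneg]; exact dedact_toReal_le_one _ _ _
      calc |(XC ⁻¹' S).indicator (fun _ => (1:ℝ)) ω| * |(condDistrib Y XC P (XC ω) R).toReal|
          ≤ 1 * 1 := mul_le_mul h1 h2 (abs_nonneg _) zero_le_one
        _ = 1 := by ring
    have hL2 : (P (XC ⁻¹' S ∩ (Y ⁻¹' R ∩ XJ ⁻¹' T))).toReal
        = ∫ ω, (XJ ⁻¹' T).indicator (fun _ => (1:ℝ)) ω * g ω ∂P := by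
      rw [hL1, ← dedact_kernel_to_indicator P hXC hXJ hT hg hgb]
      exact integral_congr_ae (Filter.Eventually.of_forall fun ω => by rw [hgdef]; ring)
    -- RHS
    have hRHS : ((P.map Z2) ⊗ₘ κY') ((S ×ˢ T) ×ˢ R)
        = ∫⁻ ω in XC ⁻¹' S ∩ XJ ⁻¹' T, condDistrib Y XC P (XC ω) R ∂P := by
      rw [Measure.compProd_apply_prod (hS.prod hT) hR]
      have : (fun p : EC × EJ => κY' p R) = fun p => condDistrib Y XC P p.1 R := by
        funext p; rw [hκY', Kernel.comap_apply]
      have hfm : Measurable fun p : EC × EJ => condDistrib Y XC P p.1 R :=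
        (Kernel.measurable_coe _ hR).comp measurable_fst
      rw [show ∫⁻ p in S ×ˢ T, κY' p R ∂(P.map Z2)
            = ∫⁻ p in S ×ˢ T, condDistrib Y XC P p.1 R ∂(P.map Z2) by rw [this],
        setLIntegral_map (hS.prod hT) hfm hZ2]
      have hset : Z2 ⁻¹' (S ×ˢ T) = XC ⁻¹' S ∩ XJ ⁻¹' T := by
        ext ω; simp [hZ2def, Set.mem_prod]
      rw [hset]
    have hRHS2 : (((P.map Z2) ⊗ₘ κY') ((S ×ˢ T) ×ˢ R)).toReal
        = ∫ ω, (XJ ⁻¹' T).indicator (fun _ => (1:ℝ)) ω * g ω ∂P := by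
      rw [hRHS]
      have hmeas : AEMeasurable (fun ω => condDistrib Y XC P (XC ω) R)
          (P.restrict (XC ⁻¹' S ∩ XJ ⁻¹' T)) :=
        ((measurable_condDistrib hR).mono hXC.comap_le le_rfl).aemeasurable
      rw [← integral_toReal hmeas (by
        filter_upwards with ω
        exact lt_of_le_of_lt prob_le_one ENNReal.one_lt_top)]
      rw [← integral_indicator ((hXC hS).inter (hXJ hT))]
      refine integral_congr_ae (Filter.Eventually.of_forall fun ω => ?_)
      by_cases h1 : ω ∈ XC ⁻¹' S <;> by_cases h2 : ω ∈ XJ ⁻¹' T <;>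
        simp [hgdef, h1, h2, Set.indicator_apply]
    rw [hLHS]
    refine (ENNReal.toReal_eq_toReal_iff' (measure_ne_top _ _) (measure_ne_top _ _)).mp ?_
    rw [hL2, hRHS2]
  have h := condDistrib_ae_eq_of_measure_eq_compProd_of_measurable hZ2 hY (κ := κY') hmeq
  have h2 := ae_of_ae_map hZ2.aemeasurable h
  filter_upwards [h2] with ω e
  rw [show (XC ω, XJ ω) = Z2 ω from rfl, e, hκY', Kernel.comap_apply]

/-- Associative Sensitivity of AI (Proposition 2, non-marginalized prediction function):
nonzero associative importance `AI(X_J | X_C; f, f)` implies that `Y` is conditionally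
dependent on `X_J` given `X_C`. -/
theorem dedact_associative_sensitivity_AI
    {Ω : Type*} [MeasurableSpace Ω] [StandardBorelSpace Ω] [Nonempty Ω]
    (P : Measure Ω) [IsProbabilityMeasure P]
    {F EC EJ E : Type*}
    [MeasurableSpace F] [StandardBorelSpace F] [Nonempty F]
    [MeasurableSpace EC] [StandardBorelSpace EC] [Nonempty EC]
    [MeasurableSpace EJ] [StandardBorelSpace EJ] [Nonempty EJ]
    [MeasurableSpace E] [StandardBorelSpace E] [Nonempty E]
    (Y : Ω → F) (XC : Ω → EC) (XJ : Ω → EJ) (X Xt1 Xt2 : Ω → E)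
    (hY : Measurable Y) (hXC : Measurable XC) (hXJ : Measurable XJ)
    (hX : Measurable X) (hXt1 : Measurable Xt1) (hXt2 : Measurable Xt2)
    -- (i) `X̃¹ ⫫ Y | X_C` and `P(X̃¹ | X_C) = P(X | X_C)`
    (hci1 : CondIndepFun (MeasurableSpace.comap XC inferInstance) hXC.comap_le Xt1 Y P)
    (hker1 : ∀ᵐ c ∂(P.map XC), condDistrib Xt1 XC P c = condDistrib X XC P c)
    -- (ii) `X̃² ⫫ Y | (X_C, X_J)` and `P(X̃² | X_C, X_J) = P(X | X_C, X_J)`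
    (hci2 : CondIndepFun (MeasurableSpace.comap (fun ω => (XC ω, XJ ω)) inferInstance)
      (Measurable.comap_le (hXC.prodMk hXJ)) Xt2 Y P)
    (hker2 : ∀ᵐ p ∂(P.map (fun ω => (XC ω, XJ ω))),
      condDistrib Xt2 (fun ω => (XC ω, XJ ω)) P p
        = condDistrib X (fun ω => (XC ω, XJ ω)) P p)
    (f : E → ℝ) (hf : Measurable f)
    (L : F × ℝ → ℝ) (hL : Measurable L)
    (hint1 : Integrable (fun ω => L (Y ω, f (Xt1 ω))) P)
    (hint2 : Integrable (fun ω => L (Y ω, f (Xt2 ω))) P)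
    -- nonzero associative importance `AI(X_J | X_C; f, f)`
    (hAI : (∫ ω, L (Y ω, f (Xt1 ω)) ∂P) - (∫ ω, L (Y ω, f (Xt2 ω)) ∂P) ≠ 0) :
    ¬ CondIndepFun (MeasurableSpace.comap XC inferInstance) hXC.comap_le Y XJ P := by
  intro H
  have hZ2 : Measurable (fun ω => (XC ω, XJ ω)) := hXC.prodMk hXJ
  have hcomap : MeasurableSpace.comap XC inferInstance
      ≤ MeasurableSpace.comap (fun ω => (XC ω, XJ ω)) inferInstance := by
    have hXCeq : XC = Prod.fst ∘ (fun ω => (XC ω, XJ ω)) := rfl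
    calc MeasurableSpace.comap XC inferInstance
        = (MeasurableSpace.comap Prod.fst inferInstance).comap (fun ω => (XC ω, XJ ω)) := by
          rw [MeasurableSpace.comap_comp]; rfl
      _ ≤ MeasurableSpace.comap (fun ω => (XC ω, XJ ω)) inferInstance :=
          MeasurableSpace.comap_mono measurable_fst.comap_le
  have hB := dedact_condDistrib_fst_of_condIndep P hY hXC hXJ H
  have hmapeq : P.map (fun ω => (Xt1 ω, Y ω)) = P.map (fun ω => (Xt2 ω, Y ω)) := by
    haveI : IsProbabilityMeasure (P.map (fun ω => (Xt1 ω, Y ω))) :=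
      Measure.isProbabilityMeasure_map (hXt1.prodMk hY).aemeasurable
    haveI : IsProbabilityMeasure (P.map (fun ω => (Xt2 ω, Y ω))) :=
      Measure.isProbabilityMeasure_map (hXt2.prodMk hY).aemeasurable
    refine dedact_rect_ext _ _ (fun T R hT hR => ?_)
    rw [Measure.map_apply (hXt1.prodMk hY) (hT.prod hR),
      Measure.map_apply (hXt2.prodMk hY) (hT.prod hR),
      Set.mk_preimage_prod, Set.mk_preimage_prod]
    refine (ENNReal.toReal_eq_toReal_iff' (measure_ne_top _ _) (measure_ne_top _ _)).mp ?_
    have hg1 : StronglyMeasurable[MeasurableSpace.comap XC inferInstance]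
        (fun ω => (condDistrib Y XC P (XC ω) R).toReal) :=
      ((measurable_condDistrib hR).ennreal_toReal).stronglyMeasurable
    have hgb : ∀ ω, ‖(condDistrib Y XC P (XC ω) R).toReal‖ ≤ 1 := fun ω => by
      rw [Real.norm_eq_abs, abs_of_nonneg ENNReal.toReal_nonneg]
      exact dedact_toReal_le_one _ _ _
    have s1 : (P (Xt1 ⁻¹' T ∩ Y ⁻¹' R)).toReal
        = ∫ ω, (X ⁻¹' T).indicator (fun _ => (1:ℝ)) ω
            * (condDistrib Y XC P (XC ω) R).toReal ∂P := by
      have h1 := dedact_inter_eq_integral_kernels P hXC hXt1 hY hX hci1 hker1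
        (MeasurableSet.univ) hT hR
      rw [Set.univ_inter] at h1
      rw [h1, ← dedact_kernel_to_indicator P hXC hX hT hg1 hgb]
      exact integral_congr_ae (Filter.Eventually.of_forall fun ω => by
        simp [Set.indicator_univ])
    have s2 : (P (Xt2 ⁻¹' T ∩ Y ⁻¹' R)).toReal
        = ∫ ω, (X ⁻¹' T).indicator (fun _ => (1:ℝ)) ω
            * (condDistrib Y XC P (XC ω) R).toReal ∂P := by
      have h2 := dedact_inter_eq_integral_kernels P hZ2 hXt2 hY hX hci2 hker2
        (MeasurableSet.univ) hT hR
      rw [Set.univ_inter] at h2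
      rw [h2, ← dedact_kernel_to_indicator P hZ2 hX hT (hg1.mono hcomap) hgb]
      refine integral_congr_ae ?_
      filter_upwards [hB] with ω e
      simp only [Set.indicator_univ, one_mul]
      rw [← e]
    rw [s1, s2]
  have hgm : Measurable fun p : E × F => L (p.2, f p.1) :=
    hL.comp (measurable_snd.prodMk (hf.comp measurable_fst))
  have e1 : ∫ ω, L (Y ω, f (Xt1 ω)) ∂P
      = ∫ p, L (p.2, f p.1) ∂(P.map (fun ω => (Xt1 ω, Y ω))) :=
    (integral_map (hXt1.prodMk hY).aemeasurable hgm.aestronglyMeasurable).symm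
  have e2 : ∫ ω, L (Y ω, f (Xt2 ω)) ∂P
      = ∫ p, L (p.2, f p.1) ∂(P.map (fun ω => (Xt2 ω, Y ω))) :=
    (integral_map (hXt2.prodMk hY).aemeasurable hgm.aestronglyMeasurable).symm
  exact hAI (sub_eq_zero_of_eq (by rw [e1, e2, hmapeq]))
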